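/- Let A = {(2,2),(2,0),(1,2),(0,4)} ⊂ ℤ². Then for every t ≥ 0, |tA| = t² + 2t + 1 = (t+1)². -/

import Mathlib

open Pointwise

private noncomputable def D (t : ℕ) : Finset (ℤ × ℤ) :=
  (Finset.Icc (0:ℤ) (2*t) ×ˢ Finset.Icc (0:ℤ) (6*t)).filter
    (fun p => p.1 ≤ 2*t ∧ 2 ∣ p.2 ∧ 4*t ≤ 2*p.1+p.2 ∧ 2*p.1+p.2 ≤ 6*t ∧ p.1+p.2 ≤ 4*t)

private lemma mem_D {t : ℕ} {p : ℤ × ℤ} :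
    p ∈ D t ↔ p.1 ≤ 2*t ∧ 2 ∣ p.2 ∧ 4*t ≤ 2*p.1+p.2 ∧ 2*p.1+p.2 ≤ 6*t ∧ p.1+p.2 ≤ 4*t := by
  simp only [D, Finset.mem_filter, Finset.mem_product, Finset.mem_Icc]
  constructor
  · rintro ⟨-, h⟩; exact h
  · rintro ⟨h1, h2, h3, h4, h5⟩
    refine ⟨⟨⟨?_, ?_⟩, ?_, ?_⟩, h1, h2, h3, h4, h5⟩ <;> omega

private lemma D_add (t : ℕ) :
    D t + ({((2:ℤ),(2:ℤ)), (2,0), (1,2), (0,4)} : Finset (ℤ × ℤ)) = D (t+1) := by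
  ext ⟨x, y⟩
  simp only [Finset.mem_add, mem_D, Finset.mem_insert, Finset.mem_singleton, Prod.ext_iff,
    Prod.mk.injEq]
  constructor
  · rintro ⟨⟨a, b⟩, hab, ⟨c, d⟩, hcd, hx, hy⟩
    simp only [Prod.fst_add, Prod.snd_add] at hx hy
    push_cast
    rcases hcd with ⟨rfl, rfl⟩ | ⟨rfl, rfl⟩ | ⟨rfl, rfl⟩ | ⟨rfl, rfl⟩ <;>
      push_cast at hab <;> omega
  · rintro ⟨h1, h2, h3, h4, h5⟩
    push_cast at h1 h3 h4 h5
    by_cases hb : 4*t + 6 ≤ 2*x + y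
    · exact ⟨(x-2, y-2), by simp only [mem_D]; push_cast; omega, (2,2), by tauto, by simp, by simp⟩
    · have hxy : 2*x + y = 4*t + 4 := by omega
      by_cases hx2 : x ≤ 2*t
      · exact ⟨(x, y-4), by simp only [mem_D]; push_cast; omega, (0,4), by tauto, by simp, by simp⟩
      · by_cases hx1 : x = 2*t + 1
        · exact ⟨(x-1, y-2), by simp only [mem_D]; push_cast; omega, (1,2), by tauto,
            by simp, by simp⟩
        · exact ⟨(x-2, y), by simp only [mem_D]; push_cast; omega, (2,0), by tauto,
            by simp, by simp⟩

private lemma smul_eq_D (t : ℕ) :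
    t • ({((2:ℤ),(2:ℤ)), (2,0), (1,2), (0,4)} : Finset (ℤ × ℤ)) = D t := by
  induction t with
  | zero =>
    rw [zero_nsmul]
    ext ⟨x, y⟩
    simp only [Finset.mem_zero, mem_D, Prod.ext_iff, Prod.fst_zero, Prod.snd_zero]
    push_cast
    omega
  | succ n ih =>
    rw [succ_nsmul, ih, D_add]

private lemma card_D (t : ℕ) : (D t).card = (t+1)^2 := by
  have key : ((Finset.range (t+1)).sigma (fun b => Finset.range (2*(t-b)+1))).card
      = (D t).card := by
    apply Finset.card_bij (fun p _ => ((2*t - p.2 : ℤ), (2*p.2 + 2*p.1 : ℤ)))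
    · rintro ⟨b, a⟩ hp
      simp only [Finset.mem_sigma, Finset.mem_range] at hp
      simp only [mem_D]
      push_cast
      omega
    · rintro ⟨b, a⟩ hp ⟨b', a'⟩ hp' h
      simp only [Prod.mk.injEq] at h
      have : a = a' ∧ b = b' := by omega
      obtain ⟨rfl, rfl⟩ := this
      rfl
    · rintro ⟨x, y⟩ hxy
      simp only [mem_D] at hxy
      obtain ⟨h1, h2, h3, h4, h5⟩ := hxy
      refine ⟨⟨(x + y/2 - 2*t).toNat, (2*t - x).toNat⟩, ?_, ?_⟩
      · simp only [Finset.mem_sigma, Finset.mem_range]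
        omega
      · simp only [Prod.mk.injEq]
        constructor <;> push_cast <;> omega
  rw [← key, Finset.card_sigma]
  have reflect := Finset.sum_range_reflect (fun j => 2*j+1) (t+1)
  have sq : ∀ n : ℕ, ∑ j ∈ Finset.range n, (2*j+1) = n^2 := by
    intro n
    induction n with
    | zero => simp
    | succ m ih => rw [Finset.sum_range_succ, ih]; ring
  calc ∑ b ∈ Finset.range (t+1), (Finset.range (2*(t-b)+1)).card
      = ∑ b ∈ Finset.range (t+1), (2*(t-b)+1) := by simp
    _ = ∑ b ∈ Finset.range (t+1), (fun j => 2*j+1) ((t+1) - 1 - b) := by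
        apply Finset.sum_congr rfl; intro b hb
        simp only [Finset.mem_range] at hb
        simp only []
        omega
    _ = ∑ j ∈ Finset.range (t+1), (2*j+1) := reflect
    _ = (t+1)^2 := sq (t+1)

/-- For `A = {(2,2),(2,0),(1,2),(0,4)} ⊂ ℤ²`, `|tA| = t² + 2t + 1 = (t+1)²` for every `t ≥ 0`. -/
theorem stmt_6 (A : Finset (ℤ × ℤ))
    (hA : A = {(2,2), (2,0), (1,2), (0,4)}) :
    ∀ t : ℕ, (t • A).card = t ^ 2 + 2 * t + 1 ∧ (t • A).card = (t + 1) ^ 2 := by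
  intro t
  subst hA
  rw [smul_eq_D, card_D]
  constructor <;> ring
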